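/- Let H be a geodesic δ-hyperbolic space, θ = 4δ, and ε > 2θ. If a geodesic line Γ ⊂ H is (2θ,B)-rigid with respect to a group G of isometries, then Γ is (ε, B + 6ε + 4θ)-rigid. -/

import Mathlib

/-- The Gromov product of `y` and `z` with respect to the base point `x`. -/
noncomputable def gromovProd {H : Type*} [MetricSpace H] (x y z : H) : ℝ :=
  (dist y x + dist z x - dist y z) / 2

/-- δ-hyperbolicity in the Gromov product sense. -/
def IsGromovHyperbolic (H : Type*) [MetricSpace H] (δ : ℝ) : Prop :=
  ∀ w x y z : H, min (gromovProd w x y) (gromovProd w y z) - δ ≤ gromovProd w x z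

/-- A geodesic parametrized by arclength from `x` to `y`. -/
def IsGeodesicFrom {H : Type*} [MetricSpace H] (γ : ℝ → H) (x y : H) : Prop :=
  γ 0 = x ∧ γ (dist x y) = y ∧
    ∀ s ∈ Set.Icc (0 : ℝ) (dist x y), ∀ t ∈ Set.Icc (0 : ℝ) (dist x y),
      dist (γ s) (γ t) = |s - t|

/-- A geodesic metric space. -/
def GeodesicSpace (H : Type*) [MetricSpace H] : Prop :=
  ∀ x y : H, ∃ γ : ℝ → H, IsGeodesicFrom γ x y

/-- A geodesic line: an isometric embedding of ℝ. -/
def IsGeodesicLine {H : Type*} [MetricSpace H] (γ : ℝ → H) : Prop :=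
  ∀ s t : ℝ, dist (γ s) (γ t) = |s - t|

/-- A subset `A` is `(ε,B)`-rigid with respect to a group `G` of isometries if
`f(A) = A` for every `f ∈ G` such that the intersection with precision `ε` of `A`
and `f(A)` has diameter at least `B`. -/
def RigidWith {H : Type*} [MetricSpace H] (G : Subgroup (H ≃ᵢ H)) (A : Set H)
    (ε B : ℝ) : Prop :=
  ∀ f : H ≃ᵢ H, f ∈ G →
    B ≤ Metric.diam {x : H | Metric.infDist x A ≤ ε ∧ Metric.infDist x (f '' A) ≤ ε} →
    f '' A = A

/-- Distance to a point of a geodesic line is at most the Gromov product plus 2δ. -/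
lemma lemA {H : Type*} [MetricSpace H] {δ : ℝ} (hδ : 0 ≤ δ)
    (hH : IsGromovHyperbolic H δ) {γ : ℝ → H} (hγ : IsGeodesicLine γ)
    (z : H) (a b : ℝ) :
    ∃ t : ℝ, dist z (γ t) ≤ gromovProd z (γ a) (γ b) + 2 * δ := by
  by_cases hab : a = b
  · refine ⟨a, ?_⟩
    have h0 : dist (γ a) (γ b) = 0 := by rw [hγ, hab]; simp
    simp only [gromovProd, h0]
    have h1 : dist (γ b) (γ a) = 0 := by rw [dist_comm]; exact h0
    have h2 : dist (γ b) z = dist (γ a) z := by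
      have := dist_triangle (γ b) (γ a) z
      have := dist_triangle (γ a) (γ b) z
      rw [dist_comm (γ a) (γ b)] at this
      linarith
    linarith [dist_comm (γ a) z]
  · set p := γ a with hp
    set q := γ b with hq
    set r := gromovProd p z q with hr
    have hpq : dist p q = |a - b| := hγ a b
    have hr0 : 0 ≤ r := by
      simp only [hr, gromovProd]
      have := dist_triangle z p q
      linarith [dist_comm z p, dist_comm q p, dist_comm z q]
    have hrle : r ≤ |a - b| := by
      simp only [hr, gromovProd]
      have := dist_triangle z q p
      linarith [dist_comm z p, dist_comm q p, dist_comm z q, dist_comm q z, hpq]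
    set t := if a ≤ b then a + r else a - r with ht
    refine ⟨t, ?_⟩
    have hpw : dist p (γ t) = r := by
      rw [hp, hγ]
      rcases le_or_gt a b with h | h
      · simp only [ht, if_pos h]; rw [abs_of_nonpos (by linarith)]; ring
      · simp only [ht, if_neg (not_le.mpr h)]; rw [abs_of_nonneg (by linarith)]; ring
    have hwq : dist (γ t) q = |a - b| - r := by
      rw [hq, hγ]
      rcases le_or_gt a b with h | h
      · have hab' : |a - b| = b - a := by rw [abs_of_nonpos (by linarith)]; ring
        rw [hab'] at hrle ⊢
        simp only [ht, if_pos h]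
        rw [abs_of_nonpos (by linarith)]; ring
      · have hab' : |a - b| = a - b := by rw [abs_of_nonneg (by linarith)]
        rw [hab'] at hrle ⊢
        simp only [ht, if_neg (not_le.mpr h)]
        rw [abs_of_nonneg (by linarith)]; ring
    have key := hH z p (γ t) q
    simp only [gromovProd] at key hr ⊢
    have e1 : dist p (γ t) = dist (γ t) p := dist_comm _ _
    have e2 : dist (γ t) q = dist q (γ t) := dist_comm _ _
    have e3 : dist z (γ t) = dist (γ t) z := dist_comm _ _
    have e4 : dist q p = dist p q := dist_comm _ _
    have e5 : dist z p = dist p z := dist_comm _ _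
    have e6 : dist z q = dist q z := dist_comm _ _
    rcases min_cases ((dist p z + dist (γ t) z - dist p (γ t)) / 2)
        ((dist (γ t) z + dist q z - dist (γ t) q) / 2) with ⟨hm, hm2⟩ | ⟨hm, hm2⟩ <;>
      rw [hm] at key <;> linarith [hpq]

/-- A point on a geodesic segment, far from both endpoints which are ε'-close to the
line, is within 4δ of the line. -/
lemma lemB {H : Type*} [MetricSpace H] {δ ε' : ℝ} (hδ : 0 ≤ δ)
    (hH : IsGromovHyperbolic H δ) {γ : ℝ → H} (hγ : IsGeodesicLine γ)
    (x y z : H) (hxyz : dist x z + dist z y = dist x y)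
    (hx : Metric.infDist x (Set.range γ) < ε')
    (hy : Metric.infDist y (Set.range γ) < ε')
    (hzx : ε' + 2 * δ < dist z x) (hzy : ε' + 2 * δ < dist z y) :
    Metric.infDist z (Set.range γ) ≤ 4 * δ := by
  have hne : (Set.range γ).Nonempty := ⟨γ 0, Set.mem_range_self 0⟩
  obtain ⟨p, hpmem, hxp⟩ := (Metric.infDist_lt_iff hne).mp hx
  obtain ⟨q, hqmem, hyq⟩ := (Metric.infDist_lt_iff hne).mp hy
  obtain ⟨a, rfl⟩ := hpmem
  obtain ⟨b, rfl⟩ := hqmem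
  have hgp : gromovProd z (γ a) (γ b) ≤ 2 * δ := by
    have h1 := hH z x (γ a) y
    have h2 := hH z (γ a) (γ b) y
    simp only [gromovProd] at h1 h2 ⊢
    have t1 := dist_triangle x z (γ a)
    have t2 := dist_triangle y z (γ b)
    have c1 := dist_comm x z
    have c2 := dist_comm y z
    have c3 := dist_comm x (γ a)
    have c4 := dist_comm y (γ b)
    have c7 := dist_comm z (γ a)
    have c8 := dist_comm z (γ b)
    have c9 := dist_comm x y
    rcases min_cases ((dist x z + dist (γ a) z - dist x (γ a)) / 2)
        ((dist (γ a) z + dist y z - dist (γ a) y) / 2) with ⟨hm, _⟩ | ⟨hm, _⟩ <;>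
      rw [hm] at h1
    · exfalso
      have tz : dist (γ a) z ≥ dist z x - dist x (γ a) := by
        have := dist_triangle z (γ a) x; linarith [dist_comm (γ a) x]
      linarith
    · rcases min_cases ((dist (γ a) z + dist (γ b) z - dist (γ a) (γ b)) / 2)
          ((dist (γ b) z + dist y z - dist (γ b) y) / 2) with ⟨hm2, _⟩ | ⟨hm2, _⟩ <;>
        rw [hm2] at h2
      · linarith
      · exfalso
        have tz : dist (γ b) z ≥ dist z y - dist y (γ b) := by
          have := dist_triangle z (γ b) y; linarith [dist_comm (γ b) y]
        linarith
  obtain ⟨t, hts⟩ := lemA hδ hH hγ z a b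
  calc Metric.infDist z (Set.range γ) ≤ dist z (γ t) :=
        Metric.infDist_le_dist_of_mem (Set.mem_range_self t)
    _ ≤ 4 * δ := by linarith

/-- If a geodesic line `Γ` in a geodesic δ-hyperbolic space is `(2θ,B)`-rigid
(`θ = 4δ`), then for every `ε > 2θ` it is `(ε, B + 6ε + 4θ)`-rigid. -/
theorem rigid_upgrade {H : Type*} [MetricSpace H] {δ : ℝ} (hδ : 0 ≤ δ)
    (hH : IsGromovHyperbolic H δ) (hgeo : GeodesicSpace H)
    (G : Subgroup (H ≃ᵢ H)) (γ : ℝ → H) (hγ : IsGeodesicLine γ)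
    (θ : ℝ) (hθ : θ = 4 * δ) (ε B : ℝ) (hε : 2 * θ < ε)
    (hrigid : RigidWith G (Set.range γ) (2 * θ) B) :
    RigidWith G (Set.range γ) ε (B + 6 * ε + 4 * θ) := by
  intro f hf hdiam
  have hθ0 : 0 ≤ θ := by rw [hθ]; linarith
  have hε0 : 0 < ε := lt_of_le_of_lt (by linarith) hε
  by_cases hB : B ≤ 0
  · exact hrigid f hf (hB.trans Metric.diam_nonneg)
  push_neg at hB
  set Γ := Set.range γ with hΓ
  set S := {x : H | Metric.infDist x Γ ≤ ε ∧ Metric.infDist x (f '' Γ) ≤ ε} with hS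
  have hfline : IsGeodesicLine (f ∘ γ) := by
    intro s t
    simp only [Function.comp_apply, IsometryEquiv.dist_eq]
    exact hγ s t
  have himg : f '' Γ = Set.range (f ∘ γ) := (Set.range_comp f γ).symm
  have hDpos : (0 : ℝ) < B + 6 * ε + 4 * θ := by linarith
  have hne_top : EMetric.diam S ≠ ⊤ := by
    intro h
    rw [Metric.diam, show Metric.ediam S = ⊤ from h] at hdiam
    simp at hdiam
    linarith
  -- pick two far-apart points of S
  have hexists : ∃ x ∈ S, ∃ y ∈ S, B + 5 * ε + 4 * θ < dist x y := by
    by_contra h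
    push_neg at h
    have := Metric.diam_le_of_forall_dist_le (s := S) (by linarith : (0:ℝ) ≤ B + 5 * ε + 4 * θ)
      (fun x hx y hy => h x hx y hy)
    linarith
  obtain ⟨x, hx, y, hy, hxy⟩ := hexists
  obtain ⟨c, hc0, hcL, hcd⟩ := hgeo x y
  set L := dist x y with hL
  have hLpos : B + 5 * ε + 4 * θ < L := hxy
  set T := ε + ε / 2 + 2 * δ with hT
  have hT0 : 0 ≤ T := by rw [hT]; linarith
  have h2TL : 2 * T < L := by rw [hT]; rw [hθ] at hLpos; linarith
  have hTmem : T ∈ Set.Icc (0 : ℝ) L := ⟨hT0, by linarith⟩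
  have hLTmem : L - T ∈ Set.Icc (0 : ℝ) L := ⟨by linarith, by linarith⟩
  have h0mem : (0 : ℝ) ∈ Set.Icc (0 : ℝ) L := ⟨le_refl 0, dist_nonneg⟩
  have hLmem : L ∈ Set.Icc (0 : ℝ) L := ⟨dist_nonneg, le_refl L⟩
  set z1 := c T with hz1
  set z2 := c (L - T) with hz2
  have d1x : dist z1 x = T := by
    rw [hz1, ← hc0, hcd T hTmem 0 h0mem, abs_of_nonneg (by linarith)]; ring
  have d1y : dist z1 y = L - T := by
    rw [hz1, ← hcL, hcd T hTmem L hLmem, abs_of_nonpos (by linarith)]; ring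
  have d2x : dist z2 x = L - T := by
    rw [hz2, ← hc0, hcd (L - T) hLTmem 0 h0mem, abs_of_nonneg (by linarith)]; ring
  have d2y : dist z2 y = T := by
    rw [hz2, ← hcL, hcd (L - T) hLTmem L hLmem, abs_of_nonpos (by linarith)]; ring
  have d12 : dist z1 z2 = L - 2 * T := by
    rw [hz1, hz2, hcd T hTmem (L - T) hLTmem, abs_of_nonpos (by linarith)]; ring
  -- membership in the 2θ-intersection
  have key : ∀ z : H, dist x z + dist z y = L → ε + ε / 4 + 2 * δ < dist z x →
      ε + ε / 4 + 2 * δ < dist z y →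
      Metric.infDist z Γ ≤ 2 * θ ∧ Metric.infDist z (f '' Γ) ≤ 2 * θ := by
    intro z hsum hzx hzy
    constructor
    · have := lemB (ε' := ε + ε / 4) hδ hH hγ x y z hsum
        (lt_of_le_of_lt hx.1 (by linarith)) (lt_of_le_of_lt hy.1 (by linarith)) hzx hzy
      rw [hΓ]; rw [hθ]; linarith
    · have hx2 : Metric.infDist x (Set.range (⇑f ∘ γ)) ≤ ε := by rw [← himg]; exact hx.2
      have hy2 : Metric.infDist y (Set.range (⇑f ∘ γ)) ≤ ε := by rw [← himg]; exact hy.2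
      have := lemB (ε' := ε + ε / 4) hδ hH hfline x y z hsum
        (lt_of_le_of_lt hx2 (by linarith)) (lt_of_le_of_lt hy2 (by linarith)) hzx hzy
      rw [himg, hθ]; linarith
  have hz1mem := key z1 (by rw [dist_comm x z1, d1x, d1y]; ring)
    (by rw [d1x, hT]; linarith) (by rw [d1y]; rw [hT] at h2TL ⊢; rw [hθ] at hLpos; linarith)
  have hz2mem := key z2 (by rw [dist_comm x z2, d2x, d2y]; ring)
    (by rw [d2x]; rw [hT] at h2TL ⊢; rw [hθ] at hLpos; linarith) (by rw [d2y, hT]; linarith)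
  set S' := {x : H | Metric.infDist x Γ ≤ 2 * θ ∧ Metric.infDist x (f '' Γ) ≤ 2 * θ} with hS'
  have hz1' : z1 ∈ S' := hz1mem
  have hz2' : z2 ∈ S' := hz2mem
  have hsub : S' ⊆ S := fun w hw => ⟨hw.1.trans (by linarith), hw.2.trans (by linarith)⟩
  have hbdS : Bornology.IsBounded S := by
    rw [Metric.isBounded_iff_ediam_ne_top]; exact hne_top
  have hbdS' : Bornology.IsBounded S' := hbdS.subset hsub
  have hBle : B ≤ Metric.diam S' := by
    have h1 : dist z1 z2 ≤ Metric.diam S' := Metric.dist_le_diam_of_mem hbdS' hz1' hz2'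
    rw [d12] at h1
    rw [hT] at h1
    rw [hθ] at hLpos
    linarith
  exact hrigid f hf hBle
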